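/- Let p be an odd prime, k ≥ 1 and n ≥ 1, and let B be a p^k-form of rank n with mod-p reduction B_red. Then the cardinality of O(B) equals p^{(k−1)·n(n−1)/2} times the cardinality of O(B_red). -/

import Mathlib

open Matrix

set_option linter.unusedSectionVars false
namespace Stmt8

variable (p k : ℕ)

/-- scalar lift `ZMod p → ZMod (p^(k+1))`, `y ↦ p^k * y.val`. -/
def iot (y : ZMod p) : ZMod (p ^ (k + 1)) := ((p ^ k * y.val : ℕ) : ZMod (p ^ (k + 1)))

lemma cast_mod (m : ℕ) :
    ((p ^ k * (m % p) : ℕ) : ZMod (p ^ (k + 1))) = ((p ^ k * m : ℕ) : ZMod (p ^ (k + 1))) := by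
  conv_rhs => rw [← Nat.div_add_mod m p]
  have h : p ^ k * (p * (m / p) + m % p) = p ^ (k + 1) * (m / p) + p ^ k * (m % p) := by ring
  have hz : ((p ^ (k + 1) * (m / p) : ℕ) : ZMod (p ^ (k + 1))) = 0 := by
    rw [ZMod.natCast_eq_zero_iff]; exact dvd_mul_right _ _
  rw [h, Nat.cast_add, hz, zero_add]

lemma cast_pk_eq {a b : ℕ} (h : a % p = b % p) :
    ((p ^ k * a : ℕ) : ZMod (p ^ (k + 1))) = ((p ^ k * b : ℕ) : ZMod (p ^ (k + 1))) := by
  rw [← cast_mod, h, cast_mod]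

variable {p} (hp : p.Prime)
include hp

lemma iot_add (y z : ZMod p) : iot p k (y + z) = iot p k y + iot p k z := by
  haveI : NeZero p := ⟨hp.pos.ne'⟩
  unfold iot
  rw [ZMod.val_add, cast_pk_eq p k (Nat.mod_mod_of_dvd _ dvd_rfl), Nat.mul_add, Nat.cast_add]

lemma iot_eq_zero_iff (y : ZMod p) : iot p k y = 0 ↔ y = 0 := by
  haveI : NeZero p := ⟨hp.pos.ne'⟩
  unfold iot
  rw [ZMod.natCast_eq_zero_iff, pow_succ,
    Nat.mul_dvd_mul_iff_left (pow_pos hp.pos k)]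
  constructor
  · intro h
    exact (ZMod.val_eq_zero _).mp (Nat.eq_zero_of_dvd_of_lt h (ZMod.val_lt y))
  · rintro rfl; simp


lemma iot_injective : Function.Injective (iot p k) := by
  intro y z h
  have h2 := iot_add k hp (y - z) z
  rw [sub_add_cancel, h, right_eq_add] at h2
  exact sub_eq_zero.mp ((iot_eq_zero_iff k hp (y - z)).mp h2)

/-- `iot` absorbs ring multiplication, reducing the factor mod `p`. -/
lemma iot_mul (y : ZMod p) (x : ZMod (p ^ (k + 1))) :
    iot p k y * x = iot p k (y * ((x.val : ℕ) : ZMod p)) := by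
  haveI : NeZero p := ⟨hp.pos.ne'⟩
  haveI : NeZero (p ^ (k + 1)) := ⟨pow_ne_zero _ hp.pos.ne'⟩
  conv_lhs => rw [← ZMod.natCast_zmod_val x]
  unfold iot
  rw [← Nat.cast_mul, mul_assoc]
  apply cast_pk_eq
  rw [ZMod.val_mul, ZMod.val_natCast, Nat.mod_mod_of_dvd _ dvd_rfl, Nat.mul_mod_mod]

lemma mul_iot (x : ZMod (p ^ (k + 1))) (y : ZMod p) :
    x * iot p k y = iot p k (((x.val : ℕ) : ZMod p) * y) := by
  rw [mul_comm, iot_mul k hp, mul_comm]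

lemma iot_mul_iot (hk : 1 ≤ k) (y z : ZMod p) : iot p k y * iot p k z = 0 := by
  unfold iot
  rw [← Nat.cast_mul, ZMod.natCast_eq_zero_iff]
  have h : p ^ k * y.val * (p ^ k * z.val) = p ^ (k + k) * (y.val * z.val) := by
    rw [pow_add]; ring
  rw [h]
  exact Dvd.dvd.mul_right (pow_dvd_pow p (by omega)) _

lemma iot_zero : iot p k 0 = 0 := by
  haveI : NeZero p := ⟨hp.pos.ne'⟩
  unfold iot; simp

lemma castHom_eq_val (hd : (p : ℕ) ∣ p ^ (k + 1)) (x : ZMod (p ^ (k + 1))) :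
    ZMod.castHom hd (ZMod p) x = ((x.val : ℕ) : ZMod p) := by
  haveI : NeZero (p ^ (k + 1)) := ⟨pow_ne_zero _ hp.pos.ne'⟩
  rw [ZMod.castHom_apply, ← ZMod.natCast_val]

lemma f_iot (hd : p ^ k ∣ p ^ (k + 1)) (y : ZMod p) :
    ZMod.castHom hd (ZMod (p ^ k)) (iot p k y) = 0 := by
  unfold iot
  rw [map_natCast, ZMod.natCast_eq_zero_iff]
  exact dvd_mul_right _ _

lemma iot_surj (hd : p ^ k ∣ p ^ (k + 1)) (x : ZMod (p ^ (k + 1)))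
    (h : ZMod.castHom hd (ZMod (p ^ k)) x = 0) : ∃ y, x = iot p k y := by
  haveI : NeZero p := ⟨hp.pos.ne'⟩
  haveI : NeZero (p ^ (k + 1)) := ⟨pow_ne_zero _ hp.pos.ne'⟩
  have hx : ((x.val : ℕ) : ZMod (p ^ k)) = 0 := by
    rw [ZMod.natCast_val, ← ZMod.castHom_apply (h := hd)]; exact h
  rw [ZMod.natCast_eq_zero_iff] at hx
  obtain ⟨m, hm⟩ := hx
  refine ⟨(m : ZMod p), ?_⟩
  unfold iot
  rw [ZMod.val_natCast, cast_mod, ← hm, ZMod.natCast_zmod_val]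


section MatrixLayer

variable (n : ℕ)

/-- matrix lift `p^k * ·` from mod-`p` matrices to mod-`p^(k+1)` matrices. -/
def Iot (Y : Matrix (Fin n) (Fin n) (ZMod p)) : Matrix (Fin n) (Fin n) (ZMod (p ^ (k + 1))) :=
  Y.map (iot p k)

variable {n}

lemma iot_sum {α : Type*} (s : Finset α) (g : α → ZMod p) :
    iot p k (∑ a ∈ s, g a) = ∑ a ∈ s, iot p k (g a) :=
  map_sum (AddMonoidHom.mk' (iot p k) (iot_add k hp)) g s

lemma Iot_add (Y Z : Matrix (Fin n) (Fin n) (ZMod p)) :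
    Iot k n (Y + Z) = Iot k n Y + Iot k n Z :=
  Matrix.map_add _ (iot_add k hp) _ _

lemma Iot_mul_right (Y : Matrix (Fin n) (Fin n) (ZMod p))
    (M : Matrix (Fin n) (Fin n) (ZMod (p ^ (k + 1)))) (hd : (p : ℕ) ∣ p ^ (k + 1)) :
    Iot k n Y * M = Iot k n (Y * M.map (ZMod.castHom hd (ZMod p))) := by
  ext i j
  simp only [Iot, Matrix.mul_apply, Matrix.map_apply]
  rw [iot_sum k hp]
  refine Finset.sum_congr rfl fun l _ => ?_
  rw [iot_mul k hp, castHom_eq_val k hp]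

lemma Iot_mul_left (Y : Matrix (Fin n) (Fin n) (ZMod p))
    (M : Matrix (Fin n) (Fin n) (ZMod (p ^ (k + 1)))) (hd : (p : ℕ) ∣ p ^ (k + 1)) :
    M * Iot k n Y = Iot k n (M.map (ZMod.castHom hd (ZMod p)) * Y) := by
  ext i j
  simp only [Iot, Matrix.mul_apply, Matrix.map_apply]
  rw [iot_sum k hp]
  refine Finset.sum_congr rfl fun l _ => ?_
  rw [mul_iot k hp, castHom_eq_val k hp]

lemma Iot_mul_Iot (hk : 1 ≤ k) (Y Z : Matrix (Fin n) (Fin n) (ZMod p)) :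
    Iot k n Y * Iot k n Z = 0 := by
  ext i j
  simp only [Iot, Matrix.mul_apply, Matrix.map_apply, Matrix.zero_apply]
  exact Finset.sum_eq_zero fun l _ => iot_mul_iot k hp hk _ _

lemma Iot_transpose (Y : Matrix (Fin n) (Fin n) (ZMod p)) :
    Iot k n Yᵀ = (Iot k n Y)ᵀ :=
  Matrix.transpose_map

lemma Iot_map_f (hd : p ^ k ∣ p ^ (k + 1)) (Y : Matrix (Fin n) (Fin n) (ZMod p)) :
    (Iot k n Y).map (ZMod.castHom hd (ZMod (p ^ k))) = 0 := by
  ext i j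
  simp [Iot, Matrix.map_apply, f_iot k hp hd]

lemma Iot_injective : Function.Injective (Iot k n (p := p)) := fun Y Z h =>
  Matrix.map_injective (iot_injective k hp) h

lemma Iot_surj (hd : p ^ k ∣ p ^ (k + 1)) (X : Matrix (Fin n) (Fin n) (ZMod (p ^ (k + 1))))
    (h : X.map (ZMod.castHom hd (ZMod (p ^ k))) = 0) : ∃ Y, X = Iot k n Y := by
  have h' : ∀ i j, ∃ y, X i j = iot p k y := fun i j =>
    iot_surj k hp hd (X i j) (by
      have := congrFun (congrFun h i) j
      simpa [Matrix.map_apply] using this)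
  choose Y hY using h'
  exact ⟨Matrix.of Y, by ext i j; exact hY i j⟩

variable (n) in
/-- entrywise set-theoretic lift of a mod-`p^k` matrix to mod-`p^(k+1)`. -/
def liftM (A : Matrix (Fin n) (Fin n) (ZMod (p ^ k))) :
    Matrix (Fin n) (Fin n) (ZMod (p ^ (k + 1))) :=
  A.map fun s => ((s.val : ℕ) : ZMod (p ^ (k + 1)))

lemma lift_f (hd : p ^ k ∣ p ^ (k + 1)) (A : Matrix (Fin n) (Fin n) (ZMod (p ^ k))) :
    (liftM k n A).map (ZMod.castHom hd (ZMod (p ^ k))) = A := by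
  haveI : NeZero (p ^ k) := ⟨pow_ne_zero _ hp.pos.ne'⟩
  ext i j
  simp [liftM, Matrix.map_apply, map_natCast, ZMod.natCast_zmod_val]

lemma lift_g (hd : (p : ℕ) ∣ p ^ (k + 1)) (hd' : (p : ℕ) ∣ p ^ k)
    (A : Matrix (Fin n) (Fin n) (ZMod (p ^ k))) :
    (liftM k n A).map (ZMod.castHom hd (ZMod p)) = A.map (ZMod.castHom hd' (ZMod p)) := by
  haveI : NeZero (p ^ k) := ⟨pow_ne_zero _ hp.pos.ne'⟩
  ext i j
  simp only [liftM, Matrix.map_apply, map_natCast]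
  rw [ZMod.castHom_apply, ← ZMod.natCast_val]

end MatrixLayer


section Skew

omit hp in
lemma card_lt_pairs (n : ℕ) : Nat.card {q : Fin n × Fin n // q.1 < q.2} = n * (n - 1) / 2 := by
  let e : {q : Fin n × Fin n // q.1 < q.2} ≃ Σ j : Fin n, Fin j.1 :=
  { toFun := fun q => ⟨q.1.2, ⟨q.1.1.1, q.2⟩⟩
    invFun := fun s => ⟨(⟨s.2.1, lt_trans s.2.2 s.1.2⟩, s.1), s.2.2⟩
    left_inv := fun q => rfl
    right_inv := fun s => rfl }
  rw [Nat.card_congr e, Nat.card_eq_fintype_card, Fintype.card_sigma]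
  simp only [Fintype.card_fin]
  rw [Fin.sum_univ_eq_sum_range (fun i => i) n, Finset.sum_range_id]

lemma card_skew (hp2 : p ≠ 2) (n : ℕ) :
    Nat.card {K : Matrix (Fin n) (Fin n) (ZMod p) // Kᵀ = -K} = p ^ (n * (n - 1) / 2) := by
  haveI : NeZero p := ⟨hp.pos.ne'⟩
  haveI : Fact p.Prime := ⟨hp⟩
  have h2 : (2 : ZMod p) ≠ 0 := by
    have h2' : ((2 : ℕ) : ZMod p) ≠ 0 := by
      rw [Ne, ZMod.natCast_eq_zero_iff]
      intro h
      exact hp2 ((Nat.prime_dvd_prime_iff_eq hp Nat.prime_two).mp h)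
    simpa using h2'
  let e : {K : Matrix (Fin n) (Fin n) (ZMod p) // Kᵀ = -K} ≃
      ({q : Fin n × Fin n // q.1 < q.2} → ZMod p) :=
  { toFun := fun K q => K.1 q.1.1 q.1.2
    invFun := fun F => ⟨Matrix.of fun i j =>
        if h : i < j then F ⟨(i, j), h⟩ else if h' : j < i then -F ⟨(j, i), h'⟩ else 0, by
      ext i j
      simp only [Matrix.transpose_apply, Matrix.neg_apply, Matrix.of_apply]
      rcases lt_trichotomy i j with h | h | h
      · rw [dif_neg (asymm h), dif_pos h, dif_pos h]
      · subst h
        rw [dif_neg (lt_irrefl i), dif_neg (lt_irrefl i), neg_zero]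
      · rw [dif_pos h, dif_neg (asymm h), dif_pos h, neg_neg]⟩
    left_inv := fun K => by
      apply Subtype.ext
      ext i j
      simp only [Matrix.of_apply]
      rcases lt_trichotomy i j with h | h | h
      · rw [dif_pos h]
      · subst h
        rw [dif_neg (lt_irrefl i), dif_neg (lt_irrefl i)]
        have ha : K.1 i i = -K.1 i i := by
          have := congrFun (congrFun K.2 i) i
          simpa using this
        have hb : (2 : ZMod p) * K.1 i i = 0 := by linear_combination ha
        exact ((mul_eq_zero.mp hb).resolve_left h2).symm
      · rw [dif_neg (asymm h), dif_pos h]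
        have := congrFun (congrFun K.2 j) i
        simp only [Matrix.transpose_apply, Matrix.neg_apply] at this
        linear_combination -this
    right_inv := fun F => by
      funext q
      obtain ⟨⟨i, j⟩, hq⟩ := q
      simp only [Matrix.of_apply]
      rw [dif_pos hq] }
  rw [Nat.card_congr e, Nat.card_fun, Nat.card_zmod, card_lt_pairs n]

end Skew

omit hp in
lemma card_iso_ringEquiv {R S : Type*} [CommRing R] [CommRing S] {n : ℕ} (e : R ≃+* S)
    (B : Matrix (Fin n) (Fin n) R) :
    Nat.card {A : Matrix (Fin n) (Fin n) R // Aᵀ * B * A = B} =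
      Nat.card {A : Matrix (Fin n) (Fin n) S // Aᵀ * (B.map e) * A = B.map e} := by
  refine Nat.card_congr (Equiv.subtypeEquiv (RingEquiv.mapMatrix e (m := Fin n)).toEquiv
    fun A => ?_)
  constructor
  · intro h
    have h' := congrArg (RingEquiv.mapMatrix e (m := Fin n)) h
    rw [_root_.map_mul, _root_.map_mul] at h'
    simpa [RingEquiv.mapMatrix_apply, ← Matrix.transpose_map] using h'
  · intro h
    apply (RingEquiv.mapMatrix e (m := Fin n)).injective
    rw [_root_.map_mul, _root_.map_mul]
    simpa [RingEquiv.mapMatrix_apply, ← Matrix.transpose_map] using h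


section Fiber

variable {n : ℕ}

lemma fiber_card (hp2 : p ≠ 2) (hk : 1 ≤ k)
    (hdf : p ^ k ∣ p ^ (k + 1)) (hdp : (p : ℕ) ∣ p ^ (k + 1)) (hdp' : (p : ℕ) ∣ p ^ k)
    (B : Matrix (Fin n) (Fin n) (ZMod (p ^ (k + 1)))) (hsymm : B.IsSymm) (hdet : IsUnit B.det)
    (A₀ : Matrix (Fin n) (Fin n) (ZMod (p ^ k)))
    (hA₀ : A₀ᵀ * B.map (ZMod.castHom hdf (ZMod (p ^ k))) * A₀
      = B.map (ZMod.castHom hdf (ZMod (p ^ k)))) :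
    Nat.card {A : Matrix (Fin n) (Fin n) (ZMod (p ^ (k + 1))) //
        (Aᵀ * B * A = B) ∧ A.map (ZMod.castHom hdf (ZMod (p ^ k))) = A₀}
      = p ^ (n * (n - 1) / 2) := by
  haveI : NeZero p := ⟨hp.pos.ne'⟩
  haveI : Fact p.Prime := ⟨hp⟩
  have h2 : (2 : ZMod p) ≠ 0 := by
    have h2' : ((2 : ℕ) : ZMod p) ≠ 0 := by
      rw [Ne, ZMod.natCast_eq_zero_iff]
      intro h
      exact hp2 ((Nat.prime_dvd_prime_iff_eq hp Nat.prime_two).mp h)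
    simpa using h2'
  set At : Matrix (Fin n) (Fin n) (ZMod (p ^ (k + 1))) := liftM k n A₀ with hAt
  set a : Matrix (Fin n) (Fin n) (ZMod p) := A₀.map (ZMod.castHom hdp' (ZMod p)) with ha
  set Bp : Matrix (Fin n) (Fin n) (ZMod p) := B.map (ZMod.castHom hdp (ZMod p)) with hBp
  have hAg : At.map (ZMod.castHom hdp (ZMod p)) = a := lift_g k hp hdp hdp' A₀
  have hAf : At.map (ZMod.castHom hdf (ZMod (p ^ k))) = A₀ := lift_f k hp hdf A₀
  -- the defect matrix and its mod-p description
  have hDf : (B - Atᵀ * B * At).map (ZMod.castHom hdf (ZMod (p ^ k))) = 0 := by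
    rw [Matrix.map_sub _ (map_sub (ZMod.castHom hdf (ZMod (p ^ k)))), Matrix.map_mul, Matrix.map_mul,
      Matrix.transpose_map, hAf, hA₀, sub_self]
  obtain ⟨C, hC⟩ := Iot_surj k hp hdf _ hDf
  have hDsymm : (B - Atᵀ * B * At)ᵀ = B - Atᵀ * B * At := by
    rw [Matrix.transpose_sub, Matrix.transpose_mul, Matrix.transpose_mul,
      Matrix.transpose_transpose, hsymm.eq, mul_assoc]
  have hCsymm : Cᵀ = C := by
    apply Iot_injective k hp
    rw [Iot_transpose k hp, ← hC, hDsymm, hC]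
  -- invertibility of the relevant mod-p matrices
  have hdetA₀ : IsUnit A₀.det := by
    have hBf : IsUnit (B.map (ZMod.castHom hdf (ZMod (p ^ k)))).det := by
      have := hdet.map (ZMod.castHom hdf (ZMod (p ^ k)))
      rwa [RingHom.map_det, RingHom.mapMatrix_apply] at this
    have h1 := congrArg Matrix.det hA₀
    rw [Matrix.det_mul, Matrix.det_mul, Matrix.det_transpose] at h1
    have h1' : A₀.det * (A₀.det * (B.map (ZMod.castHom hdf (ZMod (p ^ k)))).det)
        = (B.map (ZMod.castHom hdf (ZMod (p ^ k)))).det := by linear_combination h1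
    exact isUnit_of_mul_isUnit_left (h1' ▸ hBf)
  have hdeta : IsUnit a.det := by
    have := hdetA₀.map (ZMod.castHom hdp' (ZMod p))
    rwa [RingHom.map_det, RingHom.mapMatrix_apply, ← ha] at this
  have hdetBp : IsUnit Bp.det := by
    have := hdet.map (ZMod.castHom hdp (ZMod p))
    rwa [RingHom.map_det, RingHom.mapMatrix_apply, ← hBp] at this
  have hBpsymm : Bpᵀ = Bp := by
    rw [hBp, ← Matrix.transpose_map, hsymm.eq]
  have hdetM : IsUnit (aᵀ * Bp).det := by
    rw [Matrix.det_mul, Matrix.det_transpose]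
    exact hdeta.mul hdetBp
  -- the key reformulation of the isometry condition for lifts
  have key : ∀ Y : Matrix (Fin n) (Fin n) (ZMod p),
      ((At + Iot k n Y)ᵀ * B * (At + Iot k n Y) = B) ↔
        ((aᵀ * Bp * Y)ᵀ + aᵀ * Bp * Y = C) := by
    intro Y
    have t4 : Iot k n Yᵀ * B * Iot k n Y = 0 := by
      rw [Iot_mul_right k hp _ _ hdp, ← hBp]
      exact Iot_mul_Iot k hp hk _ _
    have t3 : Iot k n Yᵀ * B * At = Iot k n (Yᵀ * Bp * a) := by
      rw [Iot_mul_right k hp _ _ hdp, ← hBp, Iot_mul_right k hp _ _ hdp, hAg]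
    have t2 : Atᵀ * B * Iot k n Y = Iot k n (aᵀ * Bp * Y) := by
      rw [Iot_mul_left k hp _ _ hdp, Matrix.map_mul, Matrix.transpose_map, hAg, ← hBp]
    have hT : (aᵀ * Bp * Y)ᵀ = Yᵀ * Bp * a := by
      rw [Matrix.transpose_mul, Matrix.transpose_mul, Matrix.transpose_transpose,
        hBpsymm, ← mul_assoc]
    have expand : (At + Iot k n Y)ᵀ * B * (At + Iot k n Y)
        = Atᵀ * B * At + Iot k n ((aᵀ * Bp * Y)ᵀ + aᵀ * Bp * Y) := by
      rw [Matrix.transpose_add, ← Iot_transpose k hp]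
      have distrib : (Atᵀ + Iot k n Yᵀ) * B * (At + Iot k n Y)
          = Atᵀ * B * At + (Atᵀ * B * Iot k n Y + (Iot k n Yᵀ * B * At
            + Iot k n Yᵀ * B * Iot k n Y)) := by noncomm_ring
      rw [distrib, t2, t3, t4, add_zero, ← Iot_add k hp, hT, add_comm (Yᵀ * Bp * a)]
    constructor
    · intro hcond
      rw [expand] at hcond
      have h5 := eq_sub_of_add_eq' hcond
      exact Iot_injective k hp (h5.trans hC)
    · intro hcond
      rw [expand, hcond, ← hC]
      abel
  -- the parametrization of the fiber by solutions Y
  let Ψ : {Y : Matrix (Fin n) (Fin n) (ZMod p) // (aᵀ * Bp * Y)ᵀ + aᵀ * Bp * Y = C} →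
      {A : Matrix (Fin n) (Fin n) (ZMod (p ^ (k + 1))) //
        (Aᵀ * B * A = B) ∧ A.map (ZMod.castHom hdf (ZMod (p ^ k))) = A₀} :=
    fun Y => ⟨At + Iot k n Y.1, (key Y.1).mpr Y.2, by
      rw [Matrix.map_add _ (map_add (ZMod.castHom hdf (ZMod (p ^ k)))), hAf, Iot_map_f k hp hdf, add_zero]⟩
  have hΨinj : Function.Injective Ψ := by
    intro Y Y' hEq
    have h6 := congrArg Subtype.val hEq
    simp only [Ψ] at h6
    exact Subtype.ext (Iot_injective k hp (add_left_cancel h6))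
  have hΨsurj : Function.Surjective Ψ := by
    rintro ⟨A, hA1, hA2⟩
    have h7 : (A - At).map (ZMod.castHom hdf (ZMod (p ^ k))) = 0 := by
      rw [Matrix.map_sub _ (map_sub (ZMod.castHom hdf (ZMod (p ^ k)))), hAf, hA2, sub_self]
    obtain ⟨Y, hY⟩ := Iot_surj k hp hdf _ h7
    have hAtY : At + Iot k n Y = A := by rw [← hY]; abel
    refine ⟨⟨Y, (key Y).mp (by rw [hAtY]; exact hA1)⟩, ?_⟩
    exact Subtype.ext hAtY
  rw [← Nat.card_congr (Equiv.ofBijective Ψ ⟨hΨinj, hΨsurj⟩)]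
  -- substitute W = aᵀ * Bp * Y
  let eM : Matrix (Fin n) (Fin n) (ZMod p) ≃ Matrix (Fin n) (Fin n) (ZMod p) :=
  { toFun := fun Y => aᵀ * Bp * Y
    invFun := fun W => (aᵀ * Bp)⁻¹ * W
    left_inv := fun Y => by
      show (aᵀ * Bp)⁻¹ * (aᵀ * Bp * Y) = Y
      rw [← mul_assoc, Matrix.nonsing_inv_mul _ hdetM, one_mul]
    right_inv := fun W => by
      show aᵀ * Bp * ((aᵀ * Bp)⁻¹ * W) = W
      rw [← mul_assoc, Matrix.mul_nonsing_inv _ hdetM, one_mul] }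
  rw [Nat.card_congr (Equiv.subtypeEquiv eM fun Y => Iff.rfl :
    {Y : Matrix (Fin n) (Fin n) (ZMod p) // (aᵀ * Bp * Y)ᵀ + aᵀ * Bp * Y = C} ≃
    {W : Matrix (Fin n) (Fin n) (ZMod p) // Wᵀ + W = C})]
  -- shift by the particular symmetric solution
  have hW0 : ((2⁻¹ : ZMod p) • C)ᵀ = (2⁻¹ : ZMod p) • C := by
    rw [Matrix.transpose_smul, hCsymm]
  have hW0sum : (2⁻¹ : ZMod p) • C + (2⁻¹ : ZMod p) • C = C := by
    rw [← add_smul]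
    have : (2⁻¹ + 2⁻¹ : ZMod p) = 1 := by
      rw [← two_mul, mul_inv_cancel₀ h2]
    rw [this, one_smul]
  let eS : {W : Matrix (Fin n) (Fin n) (ZMod p) // Wᵀ + W = C} ≃
      {K : Matrix (Fin n) (Fin n) (ZMod p) // Kᵀ = -K} :=
  { toFun := fun W => ⟨W.1 - (2⁻¹ : ZMod p) • C, by
      rw [Matrix.transpose_sub, hW0, neg_sub, sub_eq_sub_iff_add_eq_add, hW0sum]
      exact W.2⟩
    invFun := fun K => ⟨K.1 + (2⁻¹ : ZMod p) • C, by
      rw [Matrix.transpose_add, hW0, K.2]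
      have : -K.1 + (2⁻¹ : ZMod p) • C + (K.1 + (2⁻¹ : ZMod p) • C)
          = (2⁻¹ : ZMod p) • C + (2⁻¹ : ZMod p) • C := by abel
      rw [this, hW0sum]⟩
    left_inv := fun W => by
      apply Subtype.ext; simp
    right_inv := fun K => by
      apply Subtype.ext; simp }
  rw [Nat.card_congr eS]
  exact card_skew hp hp2 n

end Fiber


lemma step (hp2 : p ≠ 2) (hk : 1 ≤ k) (n : ℕ)
    (B : Matrix (Fin n) (Fin n) (ZMod (p ^ (k + 1)))) (hsymm : B.IsSymm) (hdet : IsUnit B.det)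
    (hdf : p ^ k ∣ p ^ (k + 1)) :
    Nat.card {A : Matrix (Fin n) (Fin n) (ZMod (p ^ (k + 1))) // Aᵀ * B * A = B} =
      p ^ (n * (n - 1) / 2) *
        Nat.card {A : Matrix (Fin n) (Fin n) (ZMod (p ^ k)) //
          Aᵀ * B.map (ZMod.castHom hdf (ZMod (p ^ k))) * A
            = B.map (ZMod.castHom hdf (ZMod (p ^ k)))} := by
  haveI : NeZero p := ⟨hp.pos.ne'⟩
  haveI : NeZero (p ^ (k + 1)) := ⟨pow_ne_zero _ hp.pos.ne'⟩
  haveI : NeZero (p ^ k) := ⟨pow_ne_zero _ hp.pos.ne'⟩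
  classical
  have hdp : (p : ℕ) ∣ p ^ (k + 1) := dvd_pow_self p (Nat.succ_ne_zero k)
  have hdp' : (p : ℕ) ∣ p ^ k := dvd_pow_self p (by omega)
  set OR := {A : Matrix (Fin n) (Fin n) (ZMod (p ^ (k + 1))) // Aᵀ * B * A = B} with hOR
  set OS := {A : Matrix (Fin n) (Fin n) (ZMod (p ^ k)) //
    Aᵀ * B.map (ZMod.castHom hdf (ZMod (p ^ k))) * A
      = B.map (ZMod.castHom hdf (ZMod (p ^ k)))} with hOS
  let π : OR → OS := fun A => ⟨A.1.map (ZMod.castHom hdf (ZMod (p ^ k))), by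
    rw [← Matrix.transpose_map, ← Matrix.map_mul, ← Matrix.map_mul, A.2]⟩
  haveI : Fintype OS := Fintype.ofFinite _
  haveI : ∀ A₀ : OS, Fintype {A : OR // π A = A₀} := fun A₀ => Fintype.ofFinite _
  have hfib : ∀ A₀ : OS, Nat.card {A : OR // π A = A₀} = p ^ (n * (n - 1) / 2) := by
    intro A₀
    have e1 : {A : OR // π A = A₀} ≃ {A : Matrix (Fin n) (Fin n) (ZMod (p ^ (k + 1))) //
        (Aᵀ * B * A = B) ∧ A.map (ZMod.castHom hdf (ZMod (p ^ k))) = A₀.1} :=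
      (Equiv.subtypeEquivRight (fun A : OR =>
          (Subtype.ext_iff : π A = A₀ ↔ (A.1.map (ZMod.castHom hdf (ZMod (p ^ k))) = A₀.1)))).trans
        (Equiv.subtypeSubtypeEquivSubtypeInter
          (fun M : Matrix (Fin n) (Fin n) (ZMod (p ^ (k + 1))) => Mᵀ * B * M = B)
          (fun M => M.map (ZMod.castHom hdf (ZMod (p ^ k))) = A₀.1))
    rw [Nat.card_congr e1]
    exact fiber_card k hp hp2 hk hdf hdp hdp' B hsymm hdet A₀.1 A₀.2
  calc Nat.card OR = Nat.card (Σ A₀ : OS, {A : OR // π A = A₀}) :=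
        (Nat.card_congr (Equiv.sigmaFiberEquiv π)).symm
    _ = ∑ A₀ : OS, Nat.card {A : OR // π A = A₀} := by
        rw [Nat.card_eq_fintype_card, Fintype.card_sigma]
        exact Finset.sum_congr rfl fun A₀ _ => (Nat.card_eq_fintype_card).symm
    _ = ∑ _A₀ : OS, p ^ (n * (n - 1) / 2) := Finset.sum_congr rfl fun A₀ _ => hfib A₀
    _ = p ^ (n * (n - 1) / 2) * Nat.card OS := by
        rw [Finset.sum_const, Nat.card_eq_fintype_card, ← Finset.card_univ, smul_eq_mul,
          mul_comm]

end Stmt8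

open Stmt8 in
theorem stmt8 (p : ℕ) (hp : p.Prime) (hp2 : p ≠ 2) (k : ℕ) (hk : 1 ≤ k) (n : ℕ) (hn : 1 ≤ n)
    (B : Matrix (Fin n) (Fin n) (ZMod (p ^ k))) (hsymm : B.IsSymm) (hdet : IsUnit B.det) :
    Nat.card {A : Matrix (Fin n) (Fin n) (ZMod (p ^ k)) // Aᵀ * B * A = B} =
      p ^ ((k - 1) * (n * (n - 1) / 2)) *
        Nat.card {A : Matrix (Fin n) (Fin n) (ZMod p) //
          Aᵀ * (B.map (ZMod.castHom (dvd_pow_self p (by omega : k ≠ 0)) (ZMod p))) * A =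
            B.map (ZMod.castHom (dvd_pow_self p (by omega : k ≠ 0)) (ZMod p))} := by
  haveI : NeZero p := ⟨hp.pos.ne'⟩
  induction k, hk using Nat.le_induction with
  | base =>
    haveI : NeZero (p ^ 1) := ⟨pow_ne_zero _ hp.pos.ne'⟩
    have hd : (p : ℕ) ∣ p ^ 1 := dvd_pow_self p one_ne_zero
    have hsurj : Function.Surjective (ZMod.castHom hd (ZMod p)) := fun y =>
      ⟨((y.val : ℕ) : ZMod (p ^ 1)), by rw [map_natCast, ZMod.natCast_zmod_val]⟩
    have hbij : Function.Bijective (ZMod.castHom hd (ZMod p)) := by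
      rw [Fintype.bijective_iff_surjective_and_card]
      exact ⟨hsurj, by rw [ZMod.card, ZMod.card, pow_one]⟩
    have hcard := card_iso_ringEquiv (RingEquiv.ofBijective _ hbij) B
    simpa using hcard
  | succ k hk ih =>
    have hdf : p ^ k ∣ p ^ (k + 1) := pow_dvd_pow p (Nat.le_succ k)
    rw [step k hp hp2 hk n B hsymm hdet hdf]
    have hsymm' : (B.map (ZMod.castHom hdf (ZMod (p ^ k)))).IsSymm := hsymm.map _
    have hdet' : IsUnit (B.map (ZMod.castHom hdf (ZMod (p ^ k)))).det := by
      have := hdet.map (ZMod.castHom hdf (ZMod (p ^ k)))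
      rwa [RingHom.map_det, RingHom.mapMatrix_apply] at this
    rw [ih (B.map (ZMod.castHom hdf (ZMod (p ^ k)))) hsymm' hdet']
    have hmap : (B.map (ZMod.castHom hdf (ZMod (p ^ k)))).map
        (ZMod.castHom (dvd_pow_self p (by omega : k ≠ 0)) (ZMod p))
        = B.map (ZMod.castHom (dvd_pow_self p (by omega : k + 1 ≠ 0)) (ZMod p)) := by
      rw [Matrix.map_map, ← RingHom.coe_comp, ZMod.castHom_comp]
    rw [hmap, ← mul_assoc, ← pow_add]
    have harith : n * (n - 1) / 2 + (k - 1) * (n * (n - 1) / 2)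
        = (k + 1 - 1) * (n * (n - 1) / 2) := by
      set d := n * (n - 1) / 2
      have h2 : k - 1 + 1 = k := Nat.sub_add_cancel hk
      calc d + (k - 1) * d = (k - 1) * d + d := add_comm _ _
        _ = (k - 1 + 1) * d := (Nat.succ_mul _ _).symm
        _ = (k + 1 - 1) * d := by rw [h2, Nat.add_sub_cancel]
    rw [harith]
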